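/- Fix μ > 0, ε > 0, κ > 0 and r > q > 2. Define G : ℝ² → ℝ² by G(V) = V + μ(ε|V|^{r-2}V + κ|V|^{q-2}V). Then the Jacobian determinant of G at every V ∈ ℝ² equals (1 + μ(ε|V|^{r-2} + κ|V|^{q-2}))·(1 + μ(ε(r-1)|V|^{r-2} + κ(q-1)|V|^{q-2})), which is strictly positive. -/

import Mathlib

open scoped RealInnerProductSpace
noncomputable abbrev E2 := EuclideanSpace ℝ (Fin 2)

lemma det_formula (a c : ℝ) (V : E2) (L : E2 →ₗ[ℝ] E2)
    (hL : ∀ w, L w = a • w + (c * ⟪V, w⟫) • V) :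
    LinearMap.det L = a ^ 2 + a * c * ‖V‖ ^ 2 := by
  have hn : ‖V‖ ^ 2 = V 0 ^ 2 + V 1 ^ 2 := by
    rw [EuclideanSpace.norm_eq, Real.sq_sqrt (by positivity)]
    simp [Fin.sum_univ_two, sq]
  rw [← LinearMap.det_toMatrix (EuclideanSpace.basisFun (Fin 2) ℝ).toBasis,
    Matrix.det_fin_two]
  simp only [LinearMap.toMatrix_apply, OrthonormalBasis.coe_toBasis,
    OrthonormalBasis.coe_toBasis_repr_apply, EuclideanSpace.basisFun_repr,
    EuclideanSpace.basisFun_apply, hL, EuclideanSpace.inner_single_right,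
    map_one, conj_trivial]
  simp only [PiLp.add_apply, PiLp.smul_apply, EuclideanSpace.single_apply, smul_eq_mul]
  norm_num
  rw [hn]; ring

lemma hasFDerivAt_pow_smul_zero (p : ℝ) (hp : 0 < p) :
    HasFDerivAt (fun W : E2 => ‖W‖ ^ p • W) (0 : E2 →L[ℝ] E2) 0 := by
  rw [hasFDerivAt_iff_isLittleO_nhds_zero]
  simp only [zero_add, norm_zero, Real.zero_rpow hp.ne', zero_smul, sub_zero,
    ContinuousLinearMap.zero_apply]
  have h1 : (fun h : E2 => ‖h‖ ^ p) =o[nhds 0] (fun _ => (1 : ℝ)) := by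
    rw [Asymptotics.isLittleO_one_iff]
    have : Filter.Tendsto (fun h : E2 => ‖h‖) (nhds 0) (nhds 0) := by
      simpa using (continuous_norm (E := E2)).tendsto 0
    have h2 : Filter.Tendsto (fun t : ℝ => t ^ p) (nhds 0) (nhds 0) := by
      simpa [Real.zero_rpow hp.ne'] using
        (Real.continuousAt_rpow_const 0 p (Or.inr hp.le)).tendsto
    exact h2.comp this
  have := h1.smul_isBigO (Asymptotics.isBigO_refl (fun h : E2 => h) (nhds 0))
  simpa using this

lemma hasFDerivAt_pow_smul_ne (p : ℝ) (V : E2) (hV : V ≠ 0) :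
    HasFDerivAt (fun W : E2 => ‖W‖ ^ p • W)
      (‖V‖ ^ p • ContinuousLinearMap.id ℝ E2
        + ((p * ‖V‖ ^ (p - 2)) • innerSL ℝ V).smulRight V) V := by
  have hn : ‖V‖ ≠ 0 := norm_ne_zero_iff.mpr hV
  have hsq : (‖V‖ : ℝ) ^ (2 : ℕ) ≠ 0 := pow_ne_zero _ hn
  have h1 : HasFDerivAt (fun W : E2 => ‖W‖ ^ (2:ℕ)) (2 • innerSL ℝ V) V :=
    (hasStrictFDerivAt_norm_sq V).hasFDerivAt
  have h2 := (h1.rpow_const (p := p / 2) (Or.inl hsq))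
  have key : HasFDerivAt (fun W : E2 => ‖W‖ ^ p)
      ((p * ‖V‖ ^ (p - 2)) • innerSL ℝ V) V := by
    have heq : (fun W : E2 => (‖W‖ ^ (2:ℕ) : ℝ) ^ (p / 2)) = fun W : E2 => ‖W‖ ^ p := by
      funext W
      rw [← Real.rpow_natCast ‖W‖ 2, ← Real.rpow_mul (norm_nonneg W)]
      congr 1
      push_cast; ring
    have hpow : ((‖V‖:ℝ) ^ (2:ℕ)) ^ (p / 2 - 1) = ‖V‖ ^ (p - 2) := by
      rw [← Real.rpow_natCast ‖V‖ 2, ← Real.rpow_mul (norm_nonneg V)]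
      congr 1
      push_cast; ring
    have hcoef : (p / 2 * (‖V‖ ^ (2:ℕ) : ℝ) ^ (p / 2 - 1)) • ((2:ℕ) • innerSL ℝ V)
        = (p * ‖V‖ ^ (p - 2)) • innerSL ℝ V := by
      ext w
      simp [hpow, two_smul]
      ring
    rw [← heq, ← hcoef]
    exact h2
  have := key.smul (hasFDerivAt_id V)
  exact this

/-- `G(V) = V + μ(ε|V|^{r-2}V + κ|V|^{q-2}V)` on ℝ². -/
noncomputable def Gmap (μ ε κ r q : ℝ) : EuclideanSpace ℝ (Fin 2) → EuclideanSpace ℝ (Fin 2) :=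
  fun V => V + μ • (ε • (‖V‖ ^ (r - 2) • V) + κ • (‖V‖ ^ (q - 2) • V))

theorem stmt_3 (μ ε κ r q : ℝ) (hμ : 0 < μ) (hε : 0 < ε) (hκ : 0 < κ)
    (hq : 2 < q) (hqr : q < r) (V : EuclideanSpace ℝ (Fin 2)) :
    LinearMap.det ((fderiv ℝ (Gmap μ ε κ r q) V).toLinearMap)
      = (1 + μ * (ε * ‖V‖ ^ (r - 2) + κ * ‖V‖ ^ (q - 2)))
        * (1 + μ * (ε * (r - 1) * ‖V‖ ^ (r - 2) + κ * (q - 1) * ‖V‖ ^ (q - 2)))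
    ∧ 0 < (1 + μ * (ε * ‖V‖ ^ (r - 2) + κ * ‖V‖ ^ (q - 2)))
        * (1 + μ * (ε * (r - 1) * ‖V‖ ^ (r - 2) + κ * (q - 1) * ‖V‖ ^ (q - 2))) := by
  have hr : 2 < r := hq.trans hqr
  have hnr : (0:ℝ) ≤ ‖V‖ ^ (r - 2) := Real.rpow_nonneg (norm_nonneg V) _
  have hnq : (0:ℝ) ≤ ‖V‖ ^ (q - 2) := Real.rpow_nonneg (norm_nonneg V) _
  have hpos : 0 < (1 + μ * (ε * ‖V‖ ^ (r - 2) + κ * ‖V‖ ^ (q - 2)))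
        * (1 + μ * (ε * (r - 1) * ‖V‖ ^ (r - 2) + κ * (q - 1) * ‖V‖ ^ (q - 2))) := by
    have t1 : (0:ℝ) ≤ μ * (ε * ‖V‖ ^ (r - 2) + κ * ‖V‖ ^ (q - 2)) :=
      mul_nonneg hμ.le (add_nonneg (mul_nonneg hε.le hnr) (mul_nonneg hκ.le hnq))
    have t2 : (0:ℝ) ≤ μ * (ε * (r - 1) * ‖V‖ ^ (r - 2) + κ * (q - 1) * ‖V‖ ^ (q - 2)) :=
      mul_nonneg hμ.le (add_nonneg
        (mul_nonneg (mul_nonneg hε.le (by linarith)) hnr)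
        (mul_nonneg (mul_nonneg hκ.le (by linarith)) hnq))
    have h1 : (0:ℝ) < 1 + μ * (ε * ‖V‖ ^ (r - 2) + κ * ‖V‖ ^ (q - 2)) := by linarith
    have h2 : (0:ℝ) < 1 + μ * (ε * (r - 1) * ‖V‖ ^ (r - 2) + κ * (q - 1) * ‖V‖ ^ (q - 2)) := by
      linarith
    exact mul_pos h1 h2
  refine ⟨?_, hpos⟩
  by_cases hV : V = 0
  · subst hV
    have hG : HasFDerivAt (Gmap μ ε κ r q)
        (ContinuousLinearMap.id ℝ E2
          + μ • (ε • (0 : E2 →L[ℝ] E2) + κ • (0 : E2 →L[ℝ] E2))) (0 : E2) :=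
      (hasFDerivAt_id (0:E2)).add
        ((((hasFDerivAt_pow_smul_zero (r-2) (by linarith)).const_smul ε).add
          ((hasFDerivAt_pow_smul_zero (q-2) (by linarith)).const_smul κ)).const_smul μ)
    have hzero : (ContinuousLinearMap.id ℝ E2
          + μ • (ε • (0 : E2 →L[ℝ] E2) + κ • (0 : E2 →L[ℝ] E2)))
        = ContinuousLinearMap.id ℝ E2 := by ext w; simp
    rw [hzero] at hG
    rw [hG.fderiv]
    simp [Real.zero_rpow (by linarith : r - 2 ≠ 0), Real.zero_rpow (by linarith : q - 2 ≠ 0)]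
  · have hn0 : (0:ℝ) < ‖V‖ := norm_pos_iff.mpr hV
    set a : ℝ := 1 + μ * (ε * ‖V‖ ^ (r - 2) + κ * ‖V‖ ^ (q - 2)) with ha
    set c : ℝ := μ * (ε * ((r-2) * ‖V‖ ^ (r - 4)) + κ * ((q-2) * ‖V‖ ^ (q - 4))) with hc
    have hG : HasFDerivAt (Gmap μ ε κ r q)
        (ContinuousLinearMap.id ℝ E2
          + μ • (ε • (‖V‖ ^ (r-2) • ContinuousLinearMap.id ℝ E2
              + (((r-2) * ‖V‖ ^ (r - 2 - 2)) • innerSL ℝ V).smulRight V)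
            + κ • (‖V‖ ^ (q-2) • ContinuousLinearMap.id ℝ E2
              + (((q-2) * ‖V‖ ^ (q - 2 - 2)) • innerSL ℝ V).smulRight V))) V :=
      (hasFDerivAt_id V).add
        ((((hasFDerivAt_pow_smul_ne (r-2) V hV).const_smul ε).add
          ((hasFDerivAt_pow_smul_ne (q-2) V hV).const_smul κ)).const_smul μ)
    rw [hG.fderiv]
    have hL : ∀ w : E2, (ContinuousLinearMap.id ℝ E2
          + μ • (ε • (‖V‖ ^ (r-2) • ContinuousLinearMap.id ℝ E2
              + (((r-2) * ‖V‖ ^ (r - 2 - 2)) • innerSL ℝ V).smulRight V)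
            + κ • (‖V‖ ^ (q-2) • ContinuousLinearMap.id ℝ E2
              + (((q-2) * ‖V‖ ^ (q - 2 - 2)) • innerSL ℝ V).smulRight V))).toLinearMap w
        = a • w + (c * ⟪V, w⟫) • V := by
      intro w
      have h42 : r - 2 - 2 = r - 4 := by ring
      have h42' : q - 2 - 2 = q - 4 := by ring
      simp only [ContinuousLinearMap.coe_coe, ContinuousLinearMap.add_apply,
        ContinuousLinearMap.smul_apply, ContinuousLinearMap.id_apply,
        ContinuousLinearMap.smulRight_apply, innerSL_apply_apply, h42, h42', ha, hc]
      match_scalars <;> (try simp only [Algebra.id.smul_eq_mul]) <;> ring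
    rw [det_formula a c V _ hL]
    have e1 : ‖V‖ ^ (r - 4) * (‖V‖ ^ (2:ℕ) : ℝ) = ‖V‖ ^ (r - 2) := by
      rw [← Real.rpow_natCast ‖V‖ 2, ← Real.rpow_add hn0]
      congr 1; push_cast; ring
    have e2 : ‖V‖ ^ (q - 4) * (‖V‖ ^ (2:ℕ) : ℝ) = ‖V‖ ^ (q - 2) := by
      rw [← Real.rpow_natCast ‖V‖ 2, ← Real.rpow_add hn0]
      congr 1; push_cast; ring
    have key : c * (‖V‖ ^ (2:ℕ) : ℝ)
        = μ * (ε * (r-2) * ‖V‖ ^ (r - 2) + κ * (q-2) * ‖V‖ ^ (q - 2)) := by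
      rw [hc]
      linear_combination (μ * ε * (r-2)) * e1 + (μ * κ * (q-2)) * e2
    linear_combination a * key + a * ha
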